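/- Let n ≥ 1 and Δ ≥ 1 be integers, let T ≥ 0 and C ≥ 0 be real numbers, and let ℓ ≥ 1 be an integer. Then ∑_{s=0}^{ℓ−1} C(ℓ−1, s) · Δ^s · e^{−nT} · ( ∑_{m=ℓ}^{∞} ((nT)^m / m!) · C(m, ℓ) ) · (1/n)^ℓ · (2C/Δ)^s ≤ ( T·e·(1 + 2C) / ℓ )^ℓ, where C(·,·) denotes the binomial coefficient and e is Euler's number. -/

import Mathlib

lemma aux_tsum_choose (ℓ : ℕ) (x : ℝ) :
    (∑' m : ℕ, if ℓ ≤ m then x ^ m / (Nat.factorial m) * (m.choose ℓ : ℝ) else 0)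
      = x ^ ℓ / (Nat.factorial ℓ) * Real.exp x := by
  set f : ℕ → ℝ := fun m => if ℓ ≤ m then x ^ m / (Nat.factorial m) * (m.choose ℓ : ℝ) else 0
    with hf
  have h1 : HasSum (fun k : ℕ => f (k + ℓ))
      (x ^ ℓ / (Nat.factorial ℓ) * Real.exp x) := by
    have hb := (NormedSpace.expSeries_div_hasSum_exp x).mul_left
      (x ^ ℓ / (Nat.factorial ℓ))
    rw [Real.exp_eq_exp_ℝ]
    convert hb using 2 with k
    · rfl
    have hkey : ((k + ℓ).choose ℓ : ℝ) * (Nat.factorial ℓ) * (Nat.factorial k)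
        = ((k + ℓ).factorial : ℝ) := by
      have := Nat.choose_mul_factorial_mul_factorial (Nat.le_add_left ℓ k)
      rw [Nat.add_sub_cancel] at this
      exact_mod_cast this
    have hℓ0 : (Nat.factorial ℓ : ℝ) ≠ 0 := by positivity
    have hk0 : (Nat.factorial k : ℝ) ≠ 0 := by positivity
    have hkl0 : ((k + ℓ).factorial : ℝ) ≠ 0 := by positivity
    simp only [hf, if_pos (Nat.le_add_left ℓ k)]
    rw [pow_add]
    field_simp
    linear_combination x ^ ℓ * x ^ k * hkey
  have h2 := (hasSum_nat_add_iff (f := f) ℓ).1 h1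
  have h3 : ∑ i ∈ Finset.range ℓ, f i = 0 := by
    apply Finset.sum_eq_zero
    intro i hi
    simp only [hf, if_neg (not_le.2 (Finset.mem_range.1 hi))]
  rw [h3, add_zero] at h2
  exact h2.tsum_eq

/-- **The key estimate in the dependency-path analysis.** For integers `n, Δ ≥ 1`,
reals `T, C ≥ 0`, and an integer `ℓ ≥ 1`,
`∑_{s=0}^{ℓ−1} C(ℓ−1, s) Δ^s e^{−nT} (∑_{m=ℓ}^{∞} ((nT)^m/m!) C(m, ℓ)) (1/n)^ℓ (2C/Δ)^s
  ≤ (T·e·(1 + 2C)/ℓ)^ℓ`. -/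
theorem dependency_path_prob_bound (n Δ : ℕ) (hn : 1 ≤ n) (hΔ : 1 ≤ Δ)
    (T C : ℝ) (hT : 0 ≤ T) (hC : 0 ≤ C) (ℓ : ℕ) (hℓ : 1 ≤ ℓ) :
    ∑ s ∈ Finset.range ℓ,
        ((ℓ - 1).choose s : ℝ) * (Δ : ℝ) ^ s * Real.exp (-((n : ℝ) * T)) *
          (∑' m : ℕ, if ℓ ≤ m then ((n : ℝ) * T) ^ m / (Nat.factorial m) * (m.choose ℓ : ℝ)
            else 0) *
          (1 / (n : ℝ)) ^ ℓ * (2 * C / (Δ : ℝ)) ^ s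
      ≤ (T * Real.exp 1 * (1 + 2 * C) / (ℓ : ℝ)) ^ ℓ := by
  have hn0 : (0:ℝ) < n := by exact_mod_cast hn
  have hΔ0 : (0:ℝ) < Δ := by exact_mod_cast hΔ
  have hℓ0 : (0:ℝ) < ℓ := by exact_mod_cast hℓ
  rw [aux_tsum_choose]
  have hterm : ∀ s ∈ Finset.range ℓ,
      ((ℓ - 1).choose s : ℝ) * (Δ : ℝ) ^ s * Real.exp (-((n : ℝ) * T)) *
          (((n : ℝ) * T) ^ ℓ / (Nat.factorial ℓ) * Real.exp ((n : ℝ) * T)) *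
          (1 / (n : ℝ)) ^ ℓ * (2 * C / (Δ : ℝ)) ^ s
        = ((ℓ - 1).choose s : ℝ) * (2 * C) ^ s * (T ^ ℓ / (Nat.factorial ℓ)) := by
    intro s _
    have he : Real.exp (-((n : ℝ) * T)) * Real.exp ((n : ℝ) * T) = 1 := by
      rw [← Real.exp_add]; simp
    have hΔs : (Δ : ℝ) ^ s * (2 * C / (Δ : ℝ)) ^ s = (2 * C) ^ s := by
      rw [div_pow, ← mul_div_assoc, mul_comm, mul_div_assoc, div_self (by positivity), mul_one]
    have hns : ((n : ℝ) * T) ^ ℓ * (1 / (n : ℝ)) ^ ℓ = T ^ ℓ := by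
      rw [← mul_pow]; congr 1; field_simp
    calc ((ℓ - 1).choose s : ℝ) * (Δ : ℝ) ^ s * Real.exp (-((n : ℝ) * T)) *
          (((n : ℝ) * T) ^ ℓ / (Nat.factorial ℓ) * Real.exp ((n : ℝ) * T)) *
          (1 / (n : ℝ)) ^ ℓ * (2 * C / (Δ : ℝ)) ^ s
        = ((ℓ - 1).choose s : ℝ) * ((Δ : ℝ) ^ s * (2 * C / (Δ : ℝ)) ^ s) *
            (Real.exp (-((n : ℝ) * T)) * Real.exp ((n : ℝ) * T)) *
            (((n : ℝ) * T) ^ ℓ * (1 / (n : ℝ)) ^ ℓ / (Nat.factorial ℓ)) := by ring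
      _ = ((ℓ - 1).choose s : ℝ) * (2 * C) ^ s * (T ^ ℓ / (Nat.factorial ℓ)) := by
            rw [he, hΔs, hns, mul_one]
  rw [Finset.sum_congr rfl hterm, ← Finset.sum_mul]
  have hbin : ∑ s ∈ Finset.range ℓ, ((ℓ - 1).choose s : ℝ) * (2 * C) ^ s
      = (1 + 2 * C) ^ (ℓ - 1) := by
    have := add_pow (2 * C) (1 : ℝ) (ℓ - 1)
    rw [Nat.sub_add_cancel hℓ] at this
    rw [add_comm, this]
    apply Finset.sum_congr rfl
    intro s _
    ring
  rw [hbin]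
  -- final estimate
  have hfac : ((ℓ:ℝ)) ^ ℓ / (Nat.factorial ℓ) ≤ Real.exp ℓ :=
    Real.pow_div_factorial_le_exp (ℓ:ℝ) (le_of_lt hℓ0) ℓ
  have hfac' : (1 : ℝ) / (Nat.factorial ℓ) ≤ Real.exp 1 ^ ℓ / (ℓ:ℝ) ^ ℓ := by
    rw [div_le_div_iff₀ (by positivity) (by positivity)]
    have : Real.exp ℓ = Real.exp 1 ^ ℓ := by
      rw [← Real.exp_nat_mul]; norm_num
    rw [div_le_iff₀ (by positivity)] at hfac
    calc (1:ℝ) * (ℓ:ℝ) ^ ℓ = (ℓ:ℝ) ^ ℓ := by ring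
      _ ≤ Real.exp ℓ * (Nat.factorial ℓ) := hfac
      _ = Real.exp 1 ^ ℓ * (Nat.factorial ℓ) := by rw [this]
  have hpow : (1 + 2 * C) ^ (ℓ - 1) ≤ (1 + 2 * C) ^ ℓ :=
    pow_le_pow_right₀ (by linarith) (Nat.sub_le ℓ 1)
  have hrhs : (T * Real.exp 1 * (1 + 2 * C) / (ℓ : ℝ)) ^ ℓ
      = T ^ ℓ * (1 + 2 * C) ^ ℓ * (Real.exp 1 ^ ℓ / (ℓ:ℝ) ^ ℓ) := by
    rw [div_pow, mul_pow, mul_pow]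
    ring
  rw [hrhs]
  calc (1 + 2 * C) ^ (ℓ - 1) * (T ^ ℓ / (Nat.factorial ℓ))
      = T ^ ℓ * (1 + 2 * C) ^ (ℓ - 1) * (1 / (Nat.factorial ℓ)) := by ring
    _ ≤ T ^ ℓ * (1 + 2 * C) ^ ℓ * (Real.exp 1 ^ ℓ / (ℓ:ℝ) ^ ℓ) := by
        apply mul_le_mul
        · exact mul_le_mul_of_nonneg_left hpow (by positivity)
        · exact hfac'
        · positivity
        · positivity
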